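/- Let K ⊆ K' be finite simplicial complexes with K' = K ∪ {σ} for a single p-simplex σ. If σ is positive (dim H_p increases), then dim B^p(K') = dim B^p(K), where B^p = im(δ^{p-1}) is the p-coboundary group. If σ is negative (dim H_{p-1} decreases), then dim B^p(K') = dim B^p(K) + 1 and dim Z^{p-1}(K') = dim Z^{p-1}(K) − 1. -/

import Mathlib

open Module LinearMap

/-- Dimension of the homology group `Z/B`, computed as `Z` modulo the part of `B` inside `Z`. -/
noncomputable def homologyDim {V : Type*} [AddCommGroup V] [Module ℝ V]
    (Z B : Submodule ℝ V) : ℕ :=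
  Module.finrank ℝ (Z ⧸ (Submodule.comap Z.subtype B))

lemma homologyDim_add {V : Type*} [AddCommGroup V] [Module ℝ V] [FiniteDimensional ℝ V]
    {Z B : Submodule ℝ V} (h : B ≤ Z) :
    homologyDim Z B + finrank ℝ B = finrank ℝ Z := by
  have hmap : Submodule.map Z.subtype (Submodule.comap Z.subtype B) = B := by
    rw [Submodule.map_comap_eq, Submodule.range_subtype, inf_eq_right.mpr h]
  have hfr : finrank ℝ (Submodule.comap Z.subtype B) = finrank ℝ B := by
    have := Submodule.finrank_map_subtype_eq Z (Submodule.comap Z.subtype B)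
    rw [hmap] at this
    exact this.symm
  rw [homologyDim, ← hfr]
  exact Submodule.finrank_quotient_add_finrank _

lemma ker_adjoint_eq {E F : Type*}
    [NormedAddCommGroup E] [InnerProductSpace ℝ E] [FiniteDimensional ℝ E]
    [NormedAddCommGroup F] [InnerProductSpace ℝ F] [FiniteDimensional ℝ F]
    (A : E →ₗ[ℝ] F) : LinearMap.ker (LinearMap.adjoint A) = (LinearMap.range A)ᗮ := by
  ext x
  simp only [LinearMap.mem_ker, Submodule.mem_orthogonal]
  constructor
  · rintro h u ⟨y, rfl⟩
    rw [← LinearMap.adjoint_inner_right, h, inner_zero_right]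
  · intro h
    apply ext_inner_left ℝ
    intro v
    rw [inner_zero_right, LinearMap.adjoint_inner_right]
    exact h _ ⟨v, rfl⟩

lemma finrank_range_adjoint {E F : Type*}
    [NormedAddCommGroup E] [InnerProductSpace ℝ E] [FiniteDimensional ℝ E]
    [NormedAddCommGroup F] [InnerProductSpace ℝ F] [FiniteDimensional ℝ F]
    (A : E →ₗ[ℝ] F) :
    finrank ℝ (LinearMap.range (LinearMap.adjoint A)) = finrank ℝ (LinearMap.range A) := by
  have h1 := LinearMap.finrank_range_add_finrank_ker (LinearMap.adjoint A)
  have h2 := Submodule.finrank_add_finrank_orthogonal (LinearMap.range A)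
  rw [ker_adjoint_eq] at h1
  omega

theorem stmt11
    {C2 C1 C0 Cm : Type*}
    [NormedAddCommGroup C2] [InnerProductSpace ℝ C2] [FiniteDimensional ℝ C2]
    [NormedAddCommGroup C1] [InnerProductSpace ℝ C1] [FiniteDimensional ℝ C1]
    [NormedAddCommGroup C0] [InnerProductSpace ℝ C0] [FiniteDimensional ℝ C0]
    [NormedAddCommGroup Cm] [InnerProductSpace ℝ Cm] [FiniteDimensional ℝ Cm]
    (d2 : C2 →ₗ[ℝ] C1) (d1 : C1 →ₗ[ℝ] C0) (d0 : C0 →ₗ[ℝ] Cm)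
    (hdd1 : d1 ∘ₗ d2 = 0) (hdd0 : d0 ∘ₗ d1 = 0)
    (σ : C1) (hσ : σ ≠ 0)
    (hcoface : LinearMap.range d2 ≤ (ℝ ∙ σ)ᗮ)
    (projσ : C1 →ₗ[ℝ] C1)
    (hproj : projσ = (ℝ ∙ σ)ᗮ.subtype ∘ₗ (Submodule.orthogonalProjectionOnto (ℝ ∙ σ)ᗮ).toLinearMap) :
    ((homologyDim (LinearMap.ker d1) (LinearMap.range d2) =
        homologyDim (LinearMap.ker d1 ⊓ (ℝ ∙ σ)ᗮ) (LinearMap.range d2) + 1) →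
      Module.finrank ℝ ↥(LinearMap.range (LinearMap.adjoint d1)) =
        Module.finrank ℝ ↥(LinearMap.range (projσ ∘ₗ LinearMap.adjoint d1))) ∧
    ((homologyDim (LinearMap.ker d0) (Submodule.map d1 (ℝ ∙ σ)ᗮ) =
        homologyDim (LinearMap.ker d0) (LinearMap.range d1) + 1) →
      Module.finrank ℝ ↥(LinearMap.range (LinearMap.adjoint d1)) =
        Module.finrank ℝ ↥(LinearMap.range (projσ ∘ₗ LinearMap.adjoint d1)) + 1 ∧
      Module.finrank ℝ ↥(LinearMap.ker (projσ ∘ₗ LinearMap.adjoint d1)) =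
        Module.finrank ℝ ↥(LinearMap.ker (LinearMap.adjoint d1)) + 1) := by
  set W : Submodule ℝ C1 := (ℝ ∙ σ)ᗮ with hW
  -- projσ is self-adjoint with range W
  have hsym : LinearMap.adjoint projσ = projσ := by
    symm
    rw [LinearMap.eq_adjoint_iff]
    intro x y
    rw [hproj]
    exact W.starProjection_isSymmetric x y
  have hrangeproj : LinearMap.range projσ = W := by
    rw [hproj]
    apply le_antisymm
    · rintro _ ⟨x, rfl⟩; exact ((Submodule.orthogonalProjectionOnto W) x).2
    · intro x hx
      exact ⟨x, congrArg Subtype.val (Submodule.orthogonalProjectionOnto_mem_subspace_eq_self (K := W) ⟨x, hx⟩)⟩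
  -- rank of projσ ∘ adjoint d1 = finrank (map d1 W)
  have hadj : LinearMap.adjoint (projσ ∘ₗ LinearMap.adjoint d1) = d1 ∘ₗ projσ := by
    rw [LinearMap.adjoint_comp, LinearMap.adjoint_adjoint, hsym]
  have hrk : finrank ℝ (LinearMap.range (projσ ∘ₗ LinearMap.adjoint d1)) =
      finrank ℝ (Submodule.map d1 W) := by
    have := _root_.finrank_range_adjoint (projσ ∘ₗ LinearMap.adjoint d1)
    rw [hadj] at this
    rw [← this, LinearMap.range_comp, hrangeproj]
  have hrk' : finrank ℝ (LinearMap.range (LinearMap.adjoint d1)) =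
      finrank ℝ (LinearMap.range d1) := _root_.finrank_range_adjoint d1
  -- finrank W = finrank C1 - 1
  have hWdim : finrank ℝ W + 1 = finrank ℝ C1 := by
    have := Submodule.finrank_add_finrank_orthogonal (ℝ ∙ σ)
    rwa [finrank_span_singleton hσ, add_comm] at this
  -- restricted map d1|W
  have hrest : finrank ℝ ↥(LinearMap.ker d1 ⊓ W) + finrank ℝ (Submodule.map d1 W)
      = finrank ℝ W := by
    have h1 := LinearMap.finrank_range_add_finrank_ker (d1 ∘ₗ W.subtype)
    have hker : LinearMap.ker (d1 ∘ₗ W.subtype) = Submodule.comap W.subtype (LinearMap.ker d1) :=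
      LinearMap.ker_comp _ _
    have hrange : LinearMap.range (d1 ∘ₗ W.subtype) = Submodule.map d1 W := by
      rw [LinearMap.range_comp, Submodule.range_subtype]
    have hk : finrank ℝ (Submodule.comap W.subtype (LinearMap.ker d1)) =
        finrank ℝ ↥(LinearMap.ker d1 ⊓ W) := by
      rw [← Submodule.finrank_map_subtype_eq W, Submodule.map_comap_eq,
        Submodule.range_subtype, inf_comm]
    rw [hker, hrange, hk] at h1
    omega
  have hd2k : LinearMap.range d2 ≤ LinearMap.ker d1 := LinearMap.range_le_ker_iff.mpr hdd1
  have hd1k : LinearMap.range d1 ≤ LinearMap.ker d0 := LinearMap.range_le_ker_iff.mpr hdd0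
  have hmapk : Submodule.map d1 W ≤ LinearMap.ker d0 :=
    le_trans (Submodule.map_le_iff_le_comap.mpr (fun x _ => by
      simp only [Submodule.mem_comap, LinearMap.mem_ker]
      exact hd1k ⟨x, rfl⟩)) le_rfl
  constructor
  · -- positive case
    intro h
    have e1 := homologyDim_add hd2k
    have e2 := homologyDim_add (B := LinearMap.range d2) (Z := LinearMap.ker d1 ⊓ W)
      (le_inf hd2k hcoface)
    have e3 := LinearMap.finrank_range_add_finrank_ker d1
    -- from h, e1, e2 : finrank (ker d1) = finrank (ker d1 ⊓ W) + 1
    rw [hrk, hrk']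
    omega
  · -- negative case
    intro h
    have e1 := homologyDim_add hmapk
    have e2 := homologyDim_add (B := LinearMap.range d1) (Z := LinearMap.ker d0) hd1k
    have e3 := LinearMap.finrank_range_add_finrank_ker (projσ ∘ₗ LinearMap.adjoint d1)
    have e4 := LinearMap.finrank_range_add_finrank_ker (LinearMap.adjoint d1)
    constructor
    · rw [hrk, hrk']; omega
    · omega
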